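/- Let c be an odd positive integer, let h = |(c−2)(c−4)(c−6)|, and set q_m = c(h−1)/2. Then the pair (q_m, c) is feasible. -/

import Mathlib

/-- A pair `(q, c)` of positive integers is *feasible* for an SRNT graph if
`1 ≤ c ≤ q(q+1)`, `c` divides `q⁴ - q²`, `c + 2q` divides `q(q+1)(q+2)(q+3)`,
and the integers `α = (q⁴ - q²)/c` and `β = q(q+1)(q+2)(q+3)/(c+2q)` have the
same parity. -/
def Feasible (q c : ℤ) : Prop :=
  0 < q ∧ 1 ≤ c ∧ c ≤ q * (q + 1) ∧
  c ∣ q ^ 4 - q ^ 2 ∧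
  (c + 2 * q) ∣ q * (q + 1) * (q + 2) * (q + 3) ∧
  ((q ^ 4 - q ^ 2) / c) % 2 = (q * (q + 1) * (q + 2) * (q + 3) / (c + 2 * q)) % 2

/-- The product of four consecutive integers is divisible by 8. -/
lemma srnt_aux_eight_dvd (q : ℤ) : (8 : ℤ) ∣ q * (q + 1) * (q + 2) * (q + 3) := by
  rcases Int.even_or_odd q with ⟨a, ha⟩ | ⟨a, ha⟩
  · obtain ⟨b, hb⟩ := Int.even_mul_succ_self a
    exact ⟨b * ((q + 1) * (q + 3)), by
      rw [ha]; linear_combination (4 * (a + a + 1) * (a + a + 3)) * hb⟩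
  · obtain ⟨b, hb⟩ := Int.even_mul_succ_self (a + 1)
    exact ⟨b * (q * (q + 2)), by
      rw [ha]; linear_combination (4 * (2 * a + 1) * (2 * a + 3)) * hb⟩

/-- **Theorem 2 (odd case).**  If `c` is an odd positive integer,
`h = |(c-2)(c-4)(c-6)|` and `q_m = c(h-1)/2`, then `(q_m, c)` is feasible. -/
theorem srnt_theorem2_odd (c : ℤ) (hc : 0 < c) (hodd : Odd c)
    (h qm : ℤ) (hh : h = |(c - 2) * (c - 4) * (c - 6)|)
    (hqm : 2 * qm = c * (h - 1)) :
    Feasible qm c := by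
  obtain ⟨m, hm⟩ := hodd
  -- the product (c-2)(c-4)(c-6) is odd
  have hDodd : Odd ((c - 2) * (c - 4) * (c - 6)) :=
    ⟨4 * m ^ 3 - 18 * m ^ 2 + 23 * m - 8, by rw [hm]; ring⟩
  -- lower bound: |(c-2)(c-4)(c-6)| ≥ 3
  have hD3 : (3 : ℤ) ≤ |(c - 2) * (c - 4) * (c - 6)| := by
    rcases le_or_gt 7 c with h7 | h7
    · have h5 : (0:ℤ) ≤ c - 7 := by linarith
      have h15 : (15:ℤ) ≤ (c - 2) * (c - 4) * (c - 6) := by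
        nlinarith [mul_nonneg (mul_nonneg h5 h5) h5, mul_nonneg h5 h5]
      calc (3:ℤ) ≤ (c - 2) * (c - 4) * (c - 6) := by linarith
        _ ≤ |(c - 2) * (c - 4) * (c - 6)| := le_abs_self _
    · have hm2 : c % 2 = 1 := by omega
      interval_cases c <;> first | norm_num at hm2 ⊢ | norm_num at hm2
  -- h is odd
  have hhodd : Odd h := by
    rw [hh]
    rcases abs_cases ((c - 2) * (c - 4) * (c - 6)) with ⟨he, _⟩ | ⟨he, _⟩
    · rw [he]; exact hDodd
    · rw [he]; obtain ⟨t, ht⟩ := hDodd; exact ⟨-t - 1, by rw [ht]; ring⟩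
  obtain ⟨k, hk⟩ := hhodd
  -- k ≥ 1
  have hk1 : 1 ≤ k := by
    have : 3 ≤ h := by rw [hh]; exact hD3
    omega
  -- qm = c * k
  have hq : qm = c * k := by
    have h2 : 2 * qm = 2 * (c * k) := by rw [hqm, hk]; ring
    linarith
  subst hq
  subst hk
  have hh' : 2 * k + 1 = |(c - 2) * (c - 4) * (c - 6)| := hh
  have hckpos : 0 < c * k := mul_pos hc (by linarith)
  have hchpos : 0 < c * (2 * k + 1) := mul_pos hc (by linarith)
  -- the key divisibility: c*(2k+1) ∣ 16 * P
  have hdvd16 : c * (2 * k + 1) ∣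
      16 * ((c * k) * (c * k + 1) * (c * k + 2) * (c * k + 3)) := by
    rcases abs_cases ((c - 2) * (c - 4) * (c - 6)) with ⟨he, _⟩ | ⟨he, _⟩
    · -- D = 2k+1
      have hD : (c - 2) * (c - 4) * (c - 6) = 2 * k + 1 := by rw [hh', he]
      refine ⟨(48 - 88 * c + 44 * c * (2 * k + 1) + 36 * c ^ 2
          - 36 * c ^ 2 * (2 * k + 1) + 12 * c ^ 2 * (2 * k + 1) ^ 2
          - 4 * c ^ 3 + 6 * c ^ 3 * (2 * k + 1) - 4 * c ^ 3 * (2 * k + 1) ^ 2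
          + c ^ 3 * (2 * k + 1) ^ 3) + 1, ?_⟩
      linear_combination c * hD
    · -- D = -(2k+1)
      have hD : (c - 2) * (c - 4) * (c - 6) = -(2 * k + 1) := by
        have := hh'.trans he; linarith
      refine ⟨(48 - 88 * c + 44 * c * (2 * k + 1) + 36 * c ^ 2
          - 36 * c ^ 2 * (2 * k + 1) + 12 * c ^ 2 * (2 * k + 1) ^ 2
          - 4 * c ^ 3 + 6 * c ^ 3 * (2 * k + 1) - 4 * c ^ 3 * (2 * k + 1) ^ 2
          + c ^ 3 * (2 * k + 1) ^ 3) - 1, ?_⟩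
      linear_combination c * hD
  -- c*(2k+1) is odd, hence coprime to 16
  have hchodd : Odd (c * (2 * k + 1)) := by
    refine Odd.mul ⟨m, hm⟩ ⟨k, by ring⟩
  have hcop : IsCoprime (c * (2 * k + 1)) (16 : ℤ) := by
    have h2 : IsCoprime (c * (2 * k + 1)) (2 : ℤ) := by
      rw [Int.isCoprime_iff_gcd_eq_one]
      exact Odd.coprime_two_right (Int.natAbs_odd.mpr hchodd)
    have h16 : (16 : ℤ) = 2 ^ 4 := by norm_num
    rw [h16]
    exact h2.pow_right
  have hdvd : c * (2 * k + 1) ∣ (c * k) * (c * k + 1) * (c * k + 2) * (c * k + 3) :=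
    hcop.dvd_of_dvd_mul_left hdvd16
  obtain ⟨b, hb⟩ := hdvd
  -- b is even
  have h8 : (8 : ℤ) ∣ (c * k) * (c * k + 1) * (c * k + 2) * (c * k + 3) :=
    srnt_aux_eight_dvd (c * k)
  have hbeven : (2 : ℤ) ∣ b := by
    have h2d : (2 : ℤ) ∣ (c * (2 * k + 1)) * b := by
      rw [← hb]; exact dvd_trans ⟨4, by norm_num⟩ h8
    rcases (Int.prime_two.dvd_mul).mp h2d with hcd | hbd
    · obtain ⟨t, ht⟩ := hchodd
      obtain ⟨u, hu⟩ := hcd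
      omega
    · exact hbd
  -- α is even
  have halpha : ((c * k) ^ 4 - (c * k) ^ 2) = c * (k * ((c * k) * (c * k + 1)) * (c * k - 1)) := by
    ring
  obtain ⟨e, he⟩ := Int.even_mul_succ_self (c * k)
  have haeven : (2 : ℤ) ∣ (k * ((c * k) * (c * k + 1)) * (c * k - 1)) :=
    ⟨k * e * (c * k - 1), by rw [he]; ring⟩
  -- now prove feasibility
  unfold Feasible
  have hch : c + 2 * (c * k) = c * (2 * k + 1) := by ring
  refine ⟨hckpos, by linarith, ?_, ?_, ?_, ?_⟩
  · nlinarith [mul_pos hckpos hckpos]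
  · exact ⟨k * (c * k) * ((c * k) ^ 2 - 1), by ring⟩
  · rw [hch]; exact ⟨b, hb⟩
  · rw [hch, halpha, Int.mul_ediv_cancel_left _ (ne_of_gt hc), hb,
      Int.mul_ediv_cancel_left _ (ne_of_gt hchpos)]
    omega
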